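/- arXiv:2004.12172 — 2 statements merged into one kernel-verified Lean document; each statement's English description precedes it below -/
import Mathlib

section
/- Let A be a noetherian ring complete with respect to an ideal I, and S a profinite set. Then the structural map A → C(S,A) (constant functions) is flat. -/
open TensorProduct in
theorem flat_of_forall_trivialRel {R : Type*} [CommRing R] {M : Type*} [AddCommGroup M]
    [Module R M]
    (H : ∀ (n : ℕ) (f : Fin n → R) (x : Fin n → M), (∑ i, f i • x i) = 0 →
      ∃ (m : ℕ) (a : Fin n → Fin m → R) (y : Fin m → M),
        (∀ i, x i = ∑ j, a i j • y j) ∧ ∀ j, (∑ i, f i * a i j) = 0) :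
    Module.Flat R M := by
  rw [Module.Flat.iff_lift_lsmul_comp_subtype_injective]
  intro J _
  set φ := TensorProduct.lift ((LinearMap.lsmul R M).comp J.subtype) with hφ
  rw [injective_iff_map_eq_zero]
  intro z hz
  obtain ⟨s, rfl⟩ := TensorProduct.exists_finset z
  set e := s.equivFin with he
  set n := s.card
  set fJ : Fin n → J := fun i => ((e.symm i : s) : J × M).1 with hfJ
  set x : Fin n → M := fun i => ((e.symm i : s) : J × M).2 with hx
  have hrepr : (∑ p ∈ s, (p.1 : J) ⊗ₜ[R] (p.2 : M)) = ∑ i, fJ i ⊗ₜ[R] x i := by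
    rw [← Finset.sum_attach s (fun p => (p.1 : J) ⊗ₜ[R] (p.2 : M))]
    exact (Equiv.sum_comp e.symm (fun p => ((p : J × M).1 : J) ⊗ₜ[R] ((p : J × M).2 : M))).symm
  rw [hrepr] at hz ⊢
  have hrel : (∑ i, (fJ i : R) • x i) = 0 := by
    rw [map_sum] at hz
    simpa [φ, TensorProduct.lift.tmul] using hz
  obtain ⟨m, a, y, h1, h2⟩ := H n (fun i => (fJ i : R)) x hrel
  calc (∑ i, fJ i ⊗ₜ[R] x i) = ∑ i, fJ i ⊗ₜ[R] (∑ j, a i j • y j) := by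
        simp_rw [← h1]
    _ = ∑ i, ∑ j, (a i j • fJ i) ⊗ₜ[R] y j := by
        simp_rw [TensorProduct.tmul_sum, TensorProduct.tmul_smul, TensorProduct.smul_tmul']
    _ = ∑ j, (∑ i, a i j • fJ i) ⊗ₜ[R] y j := by
        rw [Finset.sum_comm]
        simp_rw [TensorProduct.sum_tmul]
    _ = 0 := by
        have hz2 : ∀ j, (∑ i, a i j • fJ i) = 0 := by
          intro j
          ext
          push_cast
          simpa [mul_comm] using h2 j
        simp [hz2]

section helpers


variable {A : Type*} [CommRing A]

/-- membership in `J • ⊤` for a finite pi module is coordinatewise membership in `J`. -/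
theorem pi_mem_smul_top_iff {ι : Type*} [Fintype ι] (J : Ideal A) (v : ι → A) :
    v ∈ (J • ⊤ : Submodule A (ι → A)) ↔ ∀ i, v i ∈ J := by
  classical
  constructor
  · intro hv
    refine Submodule.smul_induction_on hv ?_ ?_
    · intro r hr w _ i
      exact Ideal.mul_mem_right _ _ hr
    · intro v w hv hw i
      exact add_mem (hv i) (hw i)
  · intro hv
    have : v = ∑ i, v i • (Pi.single i (1 : A) : ι → A) := by
      funext j
      simp [Pi.single_apply, Finset.sum_apply, mul_ite]
    rw [this]
    exact Submodule.sum_mem _ fun i _ => Submodule.smul_mem_smul (hv i) trivial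

theorem ideal_smul_top_self (J : Ideal A) : (J • ⊤ : Submodule A A) = J := by
  rw [smul_eq_mul, Ideal.mul_top]

variable [TopologicalSpace A] [IsTopologicalRing A] {I : Ideal A}

theorem adic_clopen (hA : IsAdic I) (k : ℕ) (x : A) : IsClopen {y : A | y - x ∈ (I ^ k : Ideal A)} := by
  have hIk : IsOpen ((I ^ k : Ideal A) : Set A) := (isAdic_iff.mp hA).1 k
  have hIc : IsClosed ((I ^ k : Ideal A) : Set A) :=
    AddSubgroup.isClosed_of_isOpen (I ^ k).toAddSubgroup hIk
  have hcont : Continuous fun y : A => y - x := continuous_id.sub continuous_const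
  exact ⟨hIc.preimage hcont, hIk.preimage hcont⟩

variable {S : Type*} [TopologicalSpace S]

/-- Locally constant approximation of a continuous map `S → Aⁿ` to precision `I ^ k`, with
values among the values of the map. -/
theorem exists_locallyConstant_approx (hA : IsAdic I) (n k : ℕ) (X : S → Fin n → A)
    (hX : ∀ i, Continuous fun s => X s i) :
    ∃ F : S → Fin n → A, IsLocallyConstant F ∧ (∀ s, ∃ t, F s = X t) ∧
      ∀ s i, F s i - X s i ∈ I ^ k := by
  classical
  set q : S → Fin n → A ⧸ (I ^ k) := fun s i => Ideal.Quotient.mk (I ^ k) (X s i) with hq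
  have hqlc : IsLocallyConstant q := by
    rw [IsLocallyConstant.iff_isOpen_fiber]
    intro c
    rcases isEmpty_or_nonempty (q ⁻¹' {c}) with he | ⟨⟨s₀, hs₀⟩⟩
    · rw [Set.eq_empty_iff_forall_notMem.mpr fun x hx => he.elim' ⟨x, hx⟩]
      exact isOpen_empty
    · have : q ⁻¹' {c} = ⋂ i, (fun s => X s i) ⁻¹' {y | y - X s₀ i ∈ (I ^ k : Ideal A)} := by
        ext s
        simp only [Set.mem_preimage, Set.mem_singleton_iff, Set.mem_iInter, Set.mem_setOf_eq]
        rw [← hs₀]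
        constructor
        · intro h i
          exact Ideal.Quotient.eq.mp (congrFun h i)
        · intro h
          funext i
          exact Ideal.Quotient.eq.mpr (h i)
      rw [this]
      exact isOpen_iInter_of_finite fun i => ((adic_clopen hA k _).2).preimage (hX i)
  set g : (Fin n → A ⧸ (I ^ k)) → Fin n → A :=
    fun c => if h : ∃ t, q t = c then X h.choose else 0 with hg
  refine ⟨g ∘ q, hqlc.comp g, fun s => ?_, fun s i => ?_⟩
  · have h : ∃ t, q t = q s := ⟨s, rfl⟩
    exact ⟨h.choose, by simp only [Function.comp_apply, hg, dif_pos h]⟩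
  · have h : ∃ t, q t = q s := ⟨s, rfl⟩
    have hspec : q h.choose = q s := h.choose_spec
    have : (g ∘ q) s = X h.choose := by simp only [Function.comp_apply, hg, dif_pos h]
    rw [this]
    exact Ideal.Quotient.eq.mp (congrFun hspec i)


/-- Key lifting lemma: a continuous map into a submodule `K ⊆ Aⁿ` can be written as a
continuous combination of finitely many generators of `K`. -/
theorem exists_continuous_factorization [IsNoetherianRing A] [IsAdicComplete I A]
    (hA : IsAdic I) (n : ℕ) (X : S → Fin n → A) (hX : ∀ i, Continuous fun s => X s i)
    (K : Submodule A (Fin n → A)) (hXK : ∀ s, X s ∈ K) :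
    ∃ (m : ℕ) (b : Fin m → Fin n → A) (g : Fin m → S → A),
      (∀ j, b j ∈ K) ∧ (∀ j, Continuous (g j)) ∧ ∀ s, X s = ∑ j, g j s • b j := by
  classical
  -- generators of K
  obtain ⟨m, b, hb⟩ := Submodule.fg_iff_exists_fin_generating_family.mp (IsNoetherian.noetherian K)
  have hbK : ∀ j, b j ∈ K := fun j => hb ▸ Submodule.subset_span ⟨j, rfl⟩
  set π : (Fin m → A) →ₗ[A] (Fin n → A) := Fintype.linearCombination A b with hπdef
  have hπ : ∀ c, π c = ∑ j, c j • b j := fun c => Fintype.linearCombination_apply A b c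
  have hrange : LinearMap.range π = K := by
    rw [hπdef, Fintype.range_linearCombination, hb]
  -- Artin-Rees constant
  obtain ⟨c, hc⟩ := Ideal.exists_pow_inf_eq_pow_smul I K
  have hAR : ∀ (k : ℕ) (v : Fin n → A), (∀ i, v i ∈ I ^ (k + c)) → v ∈ K →
      v ∈ (I ^ k • K : Submodule A (Fin n → A)) := by
    intro k v hv hvK
    have h1 : v ∈ (I ^ (k + c) • ⊤ ⊓ K : Submodule A (Fin n → A)) :=
      ⟨(pi_mem_smul_top_iff _ _).mpr hv, hvK⟩
    rw [hc (k + c) (by omega)] at h1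
    have h2 : I ^ (k + c - c) • (I ^ c • ⊤ ⊓ K) ≤ I ^ k • K := by
      rw [show k + c - c = k by omega]
      exact Submodule.smul_mono (le_refl _) inf_le_right
    exact h2 h1
  -- locally constant approximations
  have happrox : ∀ k : ℕ, ∃ F : S → Fin n → A, IsLocallyConstant F ∧ (∀ s, ∃ t, F s = X t) ∧
      ∀ s i, F s i - X s i ∈ I ^ (k + c) :=
    fun k => exists_locallyConstant_approx hA n (k + c) X hX
  choose F hF1 hF2 hF3 using happrox
  have hFK : ∀ k s, F k s ∈ K := by
    intro k s
    obtain ⟨t, ht⟩ := hF2 k s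
    rw [ht]; exact hXK t
  -- differences lie in I^k • K
  have hdiff : ∀ k s, F (k + 1) s - F k s ∈ (I ^ k • K : Submodule A (Fin n → A)) := by
    intro k s
    refine hAR k _ (fun i => ?_) (sub_mem (hFK _ s) (hFK _ s))
    have h1 := hF3 (k + 1) s i
    have h2 := hF3 k s i
    simp only [Pi.sub_apply]
    have heq : F (k + 1) s i - F k s i = (F (k + 1) s i - X s i) - (F k s i - X s i) := by ring
    rw [heq]
    exact sub_mem (Ideal.pow_le_pow_right (by omega) h1) h2
  -- lift the differences through π
  have hlift : ∀ k : ℕ, ∃ D : S → Fin m → A, IsLocallyConstant D ∧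
      ∀ s, (∀ j, D s j ∈ I ^ k) ∧ π (D s) = F (k + 1) s - F k s := by
    intro k
    have hmap : (I ^ k • K : Submodule A (Fin n → A)) =
        Submodule.map π (I ^ k • ⊤ : Submodule A (Fin m → A)) := by
      rw [Submodule.map_smul'', Submodule.map_top, hrange]
    set τ : (Fin n → A) → (Fin m → A) := fun v =>
      if h : v ∈ (I ^ k • K : Submodule A (Fin n → A)) then
        (Submodule.mem_map.mp (hmap ▸ h)).choose else 0 with hτ
    refine ⟨(fun p : (Fin n → A) × (Fin n → A) => τ (p.1 - p.2)) ∘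
      (fun s => (F (k + 1) s, F k s)), ((hF1 (k + 1)).prodMk (hF1 k)).comp _, fun s => ?_⟩
    have h := hdiff k s
    have hspec := (Submodule.mem_map.mp (hmap ▸ h)).choose_spec
    have hτval : τ (F (k + 1) s - F k s) = (Submodule.mem_map.mp (hmap ▸ h)).choose := by
      rw [hτ]; exact dif_pos h
    constructor
    · intro j
      simp only [Function.comp_apply, hτval]
      exact (pi_mem_smul_top_iff _ _).mp hspec.1 j
    · simp only [Function.comp_apply, hτval]
      exact hspec.2
  choose D hD1 hD2 using hlift
  -- base lift
  have hbase : ∃ D₀ : S → Fin m → A, IsLocallyConstant D₀ ∧ ∀ s, π (D₀ s) = F 0 s := by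
    set τ : (Fin n → A) → (Fin m → A) := fun v =>
      if h : v ∈ K then (hrange ▸ h : v ∈ LinearMap.range π).choose else 0 with hτ
    refine ⟨τ ∘ F 0, (hF1 0).comp τ, fun s => ?_⟩
    have h := hFK 0 s
    have hspec := (hrange ▸ h : F 0 s ∈ LinearMap.range π).choose_spec
    have : τ (F 0 s) = (hrange ▸ h : F 0 s ∈ LinearMap.range π).choose := by
      rw [hτ]; exact dif_pos h
    simp only [Function.comp_apply, this]
    exact hspec
  obtain ⟨D₀, hD₀1, hD₀2⟩ := hbase
  -- partial sums
  set G : ℕ → S → Fin m → A := fun k s => D₀ s + ∑ t ∈ Finset.range k, D t s with hG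
  have hGlc : ∀ k, IsLocallyConstant (G k) := by
    intro k
    induction k with
    | zero => simpa [hG] using hD₀1
    | succ k ih =>
      have : G (k + 1) = fun s => G k s + D k s := by
        funext s; simp [hG, Finset.sum_range_succ]; abel
      rw [this]
      exact ((ih.prodMk (hD1 k)).comp (fun p : (Fin m → A) × (Fin m → A) => p.1 + p.2))
  have hπG : ∀ k s, π (G k s) = F k s := by
    intro k s
    induction k with
    | zero => simpa [hG] using hD₀2 s
    | succ k ih =>
      have : G (k + 1) s = G k s + D k s := by
        simp [hG, Finset.sum_range_succ]; abel
      rw [this, map_add, ih, (hD2 k s).2]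
      abel
  have hGcauchy : ∀ s j k l, k ≤ l → G l s j - G k s j ∈ I ^ k := by
    intro s j k l hkl
    induction l, hkl using Nat.le_induction with
    | base => simpa using zero_mem (I ^ k)
    | succ l hkl ih =>
      have : G (l + 1) s j - G k s j = D l s j + (G l s j - G k s j) := by
        simp [hG, Finset.sum_range_succ]; ring
      rw [this]
      exact add_mem (Ideal.pow_le_pow_right hkl ((hD2 l s).1 j)) ih
  -- limits
  have hlim : ∀ j s, ∃ L : A, ∀ k, G k s j - L ∈ I ^ k := by
    intro j s
    have hprec := (IsAdicComplete.toIsPrecomplete (I := I) (M := A)).prec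
      (f := fun k => G k s j) ?_
    · obtain ⟨L, hL⟩ := hprec
      refine ⟨L, fun k => ?_⟩
      have := (SModEq.sub_mem.mp (hL k))
      rwa [ideal_smul_top_self] at this
    · intro k l hkl
      rw [SModEq.sub_mem, ideal_smul_top_self]
      have := hGcauchy s j k l hkl
      simpa using neg_mem this
  choose g hg using hlim
  -- continuity of the limits
  have hgc : ∀ j, Continuous (g j) := by
    intro j
    rw [continuous_iff_continuousAt]
    intro s₀
    rw [ContinuousAt, Filter.tendsto_def]
    intro U hU
    have h0 : (fun y => g j s₀ + y) ⁻¹' U ∈ nhds (0 : A) := by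
      have hcont : Filter.Tendsto (fun y => g j s₀ + y) (nhds 0) (nhds (g j s₀)) := by
        simpa using (continuous_add_left (g j s₀)).tendsto (0 : A)
      exact hcont hU
    obtain ⟨k, hk⟩ := (isAdic_iff.mp hA).2 _ h0
    have hlc : IsLocallyConstant (fun s => G k s j) := (hGlc k).comp (fun v => v j)
    have hV : {s | G k s j = G k s₀ j} ∈ nhds s₀ := by
      have hopen : IsOpen ((fun s => G k s j) ⁻¹' {G k s₀ j}) := hlc _
      exact hopen.mem_nhds rfl
    refine Filter.mem_of_superset hV fun s hs => ?_
    have hs' : G k s j = G k s₀ j := hs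
    have h1 : g j s - g j s₀ ∈ I ^ k := by
      have ha := hg j s k
      have hb := hg j s₀ k
      have heq : g j s - g j s₀ =
          (G k s₀ j - g j s₀) - (G k s j - g j s) + (G k s j - G k s₀ j) := by ring
      have hzero : G k s j - G k s₀ j = 0 := sub_eq_zero.mpr hs'
      rw [heq, hzero, add_zero]
      exact sub_mem hb ha
    have heq2 : g j s = g j s₀ + (g j s - g j s₀) := by ring
    rw [Set.mem_preimage, heq2]
    exact hk h1
  -- the identity X = ∑ g_j • b_j
  refine ⟨m, b, g, hbK, hgc, fun s => ?_⟩
  funext i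
  have hkey : ∀ k, X s i - (∑ j, g j s • b j) i ∈ I ^ k := by
    intro k
    have e1 : X s i - F k s i ∈ I ^ k := by
      have h := neg_mem (hF3 k s i)
      rw [neg_sub] at h
      exact Ideal.pow_le_pow_right (Nat.le_add_right k c) h
    have e2 : F k s i = π (G k s) i := (congrFun (hπG k s) i).symm
    have e3 : π (G k s) i - (∑ j, g j s • b j) i ∈ I ^ k := by
      have : π (G k s) i - (∑ j, g j s • b j) i = ∑ j, (G k s j - g j s) * b j i := by
        rw [hπ]
        simp only [Finset.sum_apply, Pi.smul_apply, smul_eq_mul]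
        rw [← Finset.sum_sub_distrib]
        congr 1; funext j; ring
      rw [this]
      exact Submodule.sum_mem _ fun j _ => Ideal.mul_mem_right _ _ (hg j s k)
    have : X s i - (∑ j, g j s • b j) i =
        (X s i - F k s i) + (F k s i - π (G k s) i) + (π (G k s) i - (∑ j, g j s • b j) i) := by
      ring
    rw [e2] at e1
    rw [this, e2, sub_self]
    simpa using add_mem e1 e3
  have hfin := IsAdicComplete.toIsHausdorff.haus (I := I) (X s i - (∑ j, g j s • b j) i) ?_
  · exact sub_eq_zero.mp hfin
  · intro k
    rw [SModEq.zero, ideal_smul_top_self]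
    exact hkey k



end helpers

/-- Let `A` be a noetherian ring complete with respect to an ideal `I` (with the `I`-adic
topology), and `S` a profinite set.  Then the structural map `A → C(S,A)` (constant
functions) is flat, i.e. `C(S,A)` is a flat `A`-algebra. -/
theorem continuousMap_flat
    (A : Type*) [CommRing A] [IsNoetherianRing A] [TopologicalSpace A] [IsTopologicalRing A]
    (I : Ideal A) (hA : IsAdic I) [IsAdicComplete I A]
    (S : Type*) [TopologicalSpace S] [CompactSpace S] [T2Space S] [TotallyDisconnectedSpace S] :
    Module.Flat A C(S, A) := by
  apply flat_of_forall_trivialRel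
  intro n f x hrel
  set X : S → Fin n → A := fun s i => x i s with hXdef
  have hXc : ∀ i, Continuous fun s => X s i := fun i => (x i).continuous
  set K : Submodule A (Fin n → A) := LinearMap.ker (Fintype.linearCombination A f) with hK
  have hXK : ∀ s, X s ∈ K := by
    intro s
    rw [hK, LinearMap.mem_ker, Fintype.linearCombination_apply]
    have h0 : (∑ i, f i • x i) s = 0 := by rw [hrel]; rfl
    rw [ContinuousMap.sum_apply] at h0
    simp only [ContinuousMap.smul_apply, smul_eq_mul] at h0
    simpa [hXdef, smul_eq_mul, mul_comm] using h0
  obtain ⟨m, b, g, hbK, hgc, heq⟩ := exists_continuous_factorization hA n X hXc K hXK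
  refine ⟨m, fun i j => b j i, fun j => ⟨g j, hgc j⟩, ?_, ?_⟩
  · intro i
    ext s
    have h1 := congrFun (heq s) i
    simp only [Finset.sum_apply, Pi.smul_apply, smul_eq_mul] at h1
    simp only [ContinuousMap.sum_apply, ContinuousMap.smul_apply, ContinuousMap.coe_mk,
      smul_eq_mul]
    simpa [mul_comm] using h1
  · intro j
    have h2 := hbK j
    rw [hK, LinearMap.mem_ker, Fintype.linearCombination_apply] at h2
    simpa [smul_eq_mul, mul_comm] using h2
end

section
/- Let A be a noetherian ring complete with respect to an ideal I, S a profinite set, and J ⊆ A an open ideal (i.e., J contains some power of I). Then C(S,A)/J·C(S,A) is isomorphic as a ring to LC(S, A/J), the ring of locally constant functions S → A/J. -/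
open Topology


section helpers
variable {A : Type*} [CommRing A] [TopologicalSpace A] [IsTopologicalRing A]

lemma isOpen_of_pow_le {I N : Ideal A} (hA : IsAdic I) {n : ℕ} (h : I ^ n ≤ N) :
    IsOpen (N : Set A) := by
  have hI := (isAdic_iff.mp hA).1 n
  rw [isOpen_iff_forall_mem_open]
  intro a ha
  refine ⟨(fun b => b - a) ⁻¹' ((I ^ n : Ideal A) : Set A), ?_,
    (continuous_id.sub continuous_const).isOpen_preimage _ hI, by simpa using (I ^ n : Ideal A).zero_mem⟩
  intro b hb
  have : b - a ∈ N := h hb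
  simpa using N.add_mem this ha

lemma isOpen_preimage_quot {N : Ideal A} (hN : IsOpen (N : Set A))
    (q : A → A ⧸ N) (hq : ∀ a b : A, a - b ∈ N → q a = q b) (T : Set (A ⧸ N)) :
    IsOpen (q ⁻¹' T) := by
  rw [isOpen_iff_forall_mem_open]
  intro a ha
  refine ⟨(fun b => b - a) ⁻¹' (N : Set A), ?_,
    (continuous_id.sub continuous_const).isOpen_preimage _ hN, by simp [N.zero_mem]⟩
  intro b hb
  simpa [Set.mem_preimage, hq b a hb] using ha

lemma exists_lc_approx {S : Type*} [TopologicalSpace S] (f : C(S, A)) {N : Ideal A}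
    (hN : IsOpen (N : Set A)) :
    ∃ ℓ : LocallyConstant S A, ∀ s, ∃ t, ℓ s = f t ∧ f s - f t ∈ N := by
  classical
  let q : A → A ⧸ N := Submodule.Quotient.mk
  have hq : ∀ a b : A, a - b ∈ N → q a = q b := fun a b h => (Submodule.Quotient.eq N).mpr h
  have hP : IsLocallyConstant (fun s => q (f s)) := by
    intro T
    exact (isOpen_preimage_quot hN q hq T).preimage f.continuous
  let τ : A ⧸ N → A := fun x => if h : ∃ s, q (f s) = x then f h.choose else 0
  refine ⟨⟨fun s => τ (q (f s)), hP.comp τ⟩, fun s => ?_⟩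
  have h : ∃ t, q (f t) = q (f s) := ⟨s, rfl⟩
  refine ⟨h.choose, by simp only [LocallyConstant.coe_mk, Function.comp, τ, dif_pos h], ?_⟩
  exact (Submodule.Quotient.eq N).mp h.choose_spec.symm

omit [TopologicalSpace A] [IsTopologicalRing A] in
lemma smul_top_eq' (I : Ideal A) : (I • ⊤ : Submodule A A) = I := by
  rw [Ideal.smul_eq_mul, Ideal.mul_top]
end helpers

section main
variable {A : Type*} [CommRing A] [TopologicalSpace A] [IsTopologicalRing A]
variable {S : Type*} [TopologicalSpace S]

lemma lc_sum_apply {ι : Type*} (t : Finset ι) (F : ι → LocallyConstant S A) (s : S) :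
    (∑ i ∈ t, F i) s = ∑ i ∈ t, F i s := by
  classical
  refine t.induction_on (by simp) ?_
  intro a t ha ih
  simp [Finset.sum_insert ha, ih]

lemma key_mem [IsNoetherianRing A] {I : Ideal A} (hA : IsAdic I) [IsAdicComplete I A]
    (J : Ideal A) (f : C(S, A)) (hf : ∀ s, f s ∈ J) :
    f ∈ J.map (algebraMap A C(S, A)) := by
  classical
  obtain ⟨k, j, hj⟩ := Submodule.fg_iff_exists_fin_generating_family.mp (IsNoetherian.noetherian J)
  obtain ⟨c, hc⟩ := Ideal.exists_pow_inf_eq_pow_smul I (J : Submodule A A)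
  have hAR : ∀ n : ℕ, (I ^ (n + c) ⊓ J : Ideal A) ≤ I ^ n * J := by
    intro n
    have h1 := hc (n + c) (by omega)
    rw [smul_top_eq', smul_top_eq', Nat.add_sub_cancel] at h1
    calc (I ^ (n + c) ⊓ J : Ideal A) = I ^ n • (I ^ c ⊓ J : Ideal A) := h1
      _ ≤ I ^ n • J := smul_mono_right _ inf_le_right
      _ = I ^ n * J := Ideal.smul_eq_mul _ _
  have hspan : ∀ m : ℕ, (I ^ m * J : Ideal A) = I ^ m • Submodule.span A (Set.range j) := by
    intro m; rw [hj, ← Ideal.smul_eq_mul]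
  -- one approximation step
  have step : ∀ (m : ℕ) (r : C(S, A)), (∀ s, r s ∈ (I ^ m * J : Ideal A)) →
      ∃ (u : Fin k → LocallyConstant S A) (r' : C(S, A)),
        (∀ i s, u i s ∈ I ^ m) ∧ (∀ s, r' s ∈ (I ^ (m + 1) * J : Ideal A)) ∧
        (∀ s, r s = r' s + ∑ i, j i * u i s) := by
    intro m r hr
    obtain ⟨ℓ, hℓ⟩ := exists_lc_approx r (N := I ^ (m + 1 + c)) (isOpen_of_pow_le hA le_rfl)
    have hval : ∀ s, ℓ s ∈ I ^ m • Submodule.span A (Set.range j) := by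
      intro s
      obtain ⟨t, ht, -⟩ := hℓ s
      rw [ht, ← hspan]
      exact hr t
    let χ : A → (Fin k →₀ A) := fun v =>
      if h : v ∈ I ^ m • Submodule.span A (Set.range j) then
        ((Submodule.mem_ideal_smul_span_iff_exists_sum (I ^ m) j v).mp h).choose else 0
    have hχ1 : ∀ v (hv : v ∈ I ^ m • Submodule.span A (Set.range j)), ∀ i, χ v i ∈ I ^ m := by
      intro v hv i
      simp only [χ, dif_pos hv]
      exact ((Submodule.mem_ideal_smul_span_iff_exists_sum (I ^ m) j v).mp hv).choose_spec.choose i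
    have hχ2 : ∀ v (hv : v ∈ I ^ m • Submodule.span A (Set.range j)),
        ∑ i, j i * χ v i = v := by
      intro v hv
      simp only [χ, dif_pos hv]
      have := ((Submodule.mem_ideal_smul_span_iff_exists_sum (I ^ m) j v).mp hv).choose_spec.choose_spec
      rw [Finsupp.sum_fintype _ _ (fun i => zero_smul A (j i))] at this
      exact (Finset.sum_congr rfl fun i _ => by simp [smul_eq_mul, mul_comm]).trans this
    set u : Fin k → LocallyConstant S A := fun i => ℓ.map (fun v => χ v i) with hu_def
    have husum : ∀ s, ∑ i, j i * u i s = ℓ s := by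
      intro s
      have : ∀ i, u i s = χ (ℓ s) i := fun i => rfl
      simp only [this]
      exact hχ2 _ (hval s)
    refine ⟨u, r - (∑ i, j i • u i : LocallyConstant S A).toContinuousMap, ?_, ?_, ?_⟩
    · intro i s
      exact hχ1 _ (hval s) i
    · intro s
      have hLs : ((∑ i, j i • u i : LocallyConstant S A) : S → A) s = ℓ s := by
        rw [← husum s, lc_sum_apply]
        simp [smul_eq_mul]
      obtain ⟨t, ht, hd⟩ := hℓ s
      have h1 : r s - ℓ s ∈ (I ^ (m + 1 + c) : Ideal A) := ht ▸ hd
      have h2 : r s - ℓ s ∈ J := by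
        have hrJ : r s ∈ J := Ideal.mul_le_right (hr s)
        have hℓJ : ℓ s ∈ J := by
          rw [ht]; exact Ideal.mul_le_right (hr t)
        exact J.sub_mem hrJ hℓJ
      have := hAR (m + 1) ⟨h1, h2⟩
      simpa [hLs] using this
    · intro s
      have hLs : ((∑ i, j i • u i : LocallyConstant S A) : S → A) s = ℓ s := by
        rw [← husum s, lc_sum_apply]
        simp [smul_eq_mul]
      simp [ContinuousMap.sub_apply, hLs, husum s]
  choose! u r' hu hr' heq using step
  -- the sequence of remainders
  set seq : ℕ → C(S, A) := fun m => Nat.rec f (fun m rm => r' m rm) m with hseq_def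
  have hseqS : ∀ m, seq (m + 1) = r' m (seq m) := fun m => rfl
  have hmem : ∀ m, ∀ s, seq m s ∈ (I ^ m * J : Ideal A) := by
    intro m
    induction m with
    | zero => intro s; have h0 : seq 0 s ∈ J := hf s; simpa using h0
    | succ n ih =>
      intro s
      rw [hseqS]
      exact hr' n (seq n) ih s
  have huu : ∀ m i s, (u m (seq m) i) s ∈ (I ^ m : Ideal A) := fun m i s => hu m (seq m) (hmem m) i s
  have heq' : ∀ m s, seq m s = seq (m + 1) s + ∑ i, j i * (u m (seq m) i) s := by
    intro m s
    rw [hseqS]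
    exact heq m (seq m) (hmem m) s
  -- telescoping
  have htel : ∀ n s, f s = seq n s + ∑ t ∈ Finset.range n, ∑ i, j i * (u t (seq t) i) s := by
    intro n s
    induction n with
    | zero => simp [hseq_def]
    | succ n ih =>
      rw [Finset.sum_range_succ, ih, heq' n s]
      ring
  -- partial sums
  set psum : ℕ → Fin k → LocallyConstant S A := fun n i => ∑ t ∈ Finset.range n, u t (seq t) i
    with hpsum_def
  have happly : ∀ n i s, (psum n i) s = ∑ t ∈ Finset.range n, (u t (seq t) i) s := by
    intro n i s
    simp [hpsum_def, lc_sum_apply]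
  -- convergence
  have hcau : ∀ (i : Fin k) (s : S), ∃ L : A, ∀ n,
      (psum n i) s ≡ L [SMOD (I ^ n • ⊤ : Submodule A A)] := by
    intro i s
    apply IsPrecomplete.prec (IsAdicComplete.toIsPrecomplete)
    intro m n hmn
    rw [SModEq.sub_mem, smul_top_eq']
    have hsub : (psum m i) s - (psum n i) s = -∑ t ∈ Finset.Ico m n, (u t (seq t) i) s := by
      rw [happly, happly, Finset.sum_Ico_eq_sub _ hmn]
      ring
    rw [hsub]
    exact neg_mem (Submodule.sum_mem _ fun t ht =>
      Ideal.pow_le_pow_right (Finset.mem_Ico.mp ht).1 (huu t i s))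
  choose g hg using hcau
  have hdiff : ∀ i s n, g i s - (psum n i) s ∈ (I ^ n : Ideal A) := by
    intro i s n
    have := (hg i s n).symm
    rw [SModEq.sub_mem, smul_top_eq'] at this
    exact this
  -- continuity of the limits
  have hgc : ∀ i, Continuous (g i) := by
    intro i
    rw [continuous_iff_continuousAt]
    intro s₀ V hV
    have hW : (fun x => g i s₀ + x) ⁻¹' V ∈ 𝓝 (0 : A) := by
      have hca : ContinuousAt (fun x => g i s₀ + x) 0 :=
        (continuous_const.add continuous_id).continuousAt
      exact hca (by simpa using hV)
    obtain ⟨n, hn⟩ := (isAdic_iff.mp hA).2 _ hW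
    have hUopen : IsOpen {s : S | (psum n i) s = (psum n i) s₀} :=
      (psum n i).isLocallyConstant {x | x = (psum n i) s₀}
    rw [Filter.mem_map]
    refine Filter.mem_of_superset (hUopen.mem_nhds (show (psum n i) s₀ = (psum n i) s₀ from rfl)) ?_
    intro s hs
    have h1 : g i s - g i s₀ ∈ (I ^ n : Ideal A) := by
      have e : g i s - g i s₀ = (g i s - (psum n i) s) - (g i s₀ - (psum n i) s₀) := by
        rw [hs]; ring
      rw [e]
      exact sub_mem (hdiff i s n) (hdiff i s₀ n)
    have := hn h1
    simpa using this
  -- final identity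
  set G : Fin k → C(S, A) := fun i => ⟨g i, hgc i⟩ with hG_def
  have hfin : f = ∑ i, algebraMap A C(S, A) (j i) * G i := by
    ext s
    have hsum_apply : (∑ i, algebraMap A C(S, A) (j i) * G i) s = ∑ i, j i * g i s := by
      simp [hG_def]
    rw [hsum_apply]
    have hz : ∀ n : ℕ, f s - ∑ i, j i * g i s ∈ (I ^ n : Ideal A) := by
      intro n
      have e : f s - ∑ i, j i * g i s
          = seq n s - ∑ i, j i * (g i s - (psum n i) s) := by
        rw [htel n s]
        have : ∑ t ∈ Finset.range n, ∑ i, j i * (u t (seq t) i) s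
            = ∑ i, j i * (psum n i) s := by
          rw [Finset.sum_comm]
          exact Finset.sum_congr rfl fun i _ => by rw [happly, Finset.mul_sum]
        rw [this]
        have e2 : ∑ i, j i * (g i s - (psum n i) s)
            = ∑ i, j i * g i s - ∑ i, j i * (psum n i) s := by
          rw [← Finset.sum_sub_distrib]
          exact Finset.sum_congr rfl fun i _ => mul_sub _ _ _
        rw [e2]
        ring
      rw [e]
      refine sub_mem ?_ (Submodule.sum_mem _ fun i _ => Ideal.mul_mem_left _ _ (hdiff i s n))
      exact Ideal.mul_le_left (hmem n s)
    have h0 : f s - ∑ i, j i * g i s = 0 := by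
      refine (IsAdicComplete.toIsHausdorff (I := I) (M := A)).haus (f s - ∑ i, j i * g i s) fun n => ?_
      rw [SModEq.zero, smul_top_eq']
      exact hz n
    exact sub_eq_zero.mp h0
  rw [hfin]
  refine Ideal.sum_mem _ fun i _ => Ideal.mul_mem_right _ _ ?_
  exact Ideal.mem_map_of_mem _ (hj ▸ Submodule.subset_span (Set.mem_range_self i))
end main

/-- Let `A` be a noetherian ring complete with respect to an ideal `I` (with the `I`-adic
topology), `S` a profinite set, and `J ⊆ A` an open ideal (i.e. `J` contains a power of
`I`).  Then `C(S,A)/J·C(S,A)` is isomorphic as a ring to the ring `LC(S, A/J)` of locally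
constant functions `S → A/J`. -/
theorem continuousMap_quotient_iso_locallyConstant
    (A : Type*) [CommRing A] [IsNoetherianRing A] [TopologicalSpace A] [IsTopologicalRing A]
    (I : Ideal A) (hA : IsAdic I) [IsAdicComplete I A]
    (S : Type*) [TopologicalSpace S] [CompactSpace S] [T2Space S] [TotallyDisconnectedSpace S]
    (J : Ideal A) (hJ : ∃ n : ℕ, I ^ n ≤ J) :
    Nonempty ((C(S, A) ⧸ J.map (algebraMap A C(S, A))) ≃+* LocallyConstant S (A ⧸ J)) := by
  classical
  obtain ⟨n, hn⟩ := hJ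
  have hJopen : IsOpen (J : Set A) := isOpen_of_pow_le hA hn
  have hq : ∀ a b : A, a - b ∈ J → Ideal.Quotient.mk J a = Ideal.Quotient.mk J b := by
    intro a b h
    exact Ideal.Quotient.eq.mpr h
  -- the ring hom φ
  have hlc : ∀ f : C(S, A), IsLocallyConstant (fun s => Ideal.Quotient.mk J (f s)) := by
    intro f T
    exact (isOpen_preimage_quot hJopen (Ideal.Quotient.mk J) hq T).preimage f.continuous
  let φ : C(S, A) →+* LocallyConstant S (A ⧸ J) :=
    { toFun := fun f => ⟨fun s => Ideal.Quotient.mk J (f s), hlc f⟩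
      map_one' := by ext s; simp
      map_mul' := fun f g => by ext s; simp
      map_zero' := by ext s; simp
      map_add' := fun f g => by ext s; simp }
  have hφ_apply : ∀ (f : C(S, A)) (s : S), φ f s = Ideal.Quotient.mk J (f s) := fun f s => rfl
  -- surjectivity
  have hsurj : Function.Surjective φ := by
    intro ℓ
    let σ : A ⧸ J → A := fun x => (Ideal.Quotient.mk_surjective x).choose
    have hσ : ∀ x, Ideal.Quotient.mk J (σ x) = x := fun x =>
      (Ideal.Quotient.mk_surjective x).choose_spec
    refine ⟨(ℓ.map σ).toContinuousMap, ?_⟩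
    ext s
    simp [hφ_apply, LocallyConstant.map_apply, hσ]
  -- kernel
  have hker : RingHom.ker φ = J.map (algebraMap A C(S, A)) := by
    apply le_antisymm
    · intro f hf
      refine key_mem hA J f fun s => ?_
      have : φ f = 0 := hf
      have h2 : φ f s = 0 := by rw [this]; rfl
      rw [hφ_apply] at h2
      exact (Ideal.Quotient.eq_zero_iff_mem).mp h2
    · rw [Ideal.map_le_iff_le_comap]
      intro a ha
      show φ (algebraMap A C(S, A) a) = 0
      ext s
      have : (algebraMap A C(S, A) a) s = a := rfl
      rw [hφ_apply, this]
      simpa using (Ideal.Quotient.eq_zero_iff_mem).mpr ha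
  exact ⟨(Ideal.quotEquivOfEq hker.symm).trans (RingHom.quotientKerEquivOfSurjective hsurj)⟩
end
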